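/- Let F be a finite group acting by isometries on a metric space Z. Then the covering dimension of Z equals the covering dimension of the quotient metric space F\Z. -/

import Mathlib

open Set

/-- Covering dimension `≤ n`: every open cover has an open refinement in which
every point lies in at most `n+1` members (valid characterization for metric spaces). -/
def CoverDimLE (X : Type*) [TopologicalSpace X] (n : ℕ) : Prop :=
  ∀ U : Set (Set X), (∀ u ∈ U, IsOpen u) → ⋃₀ U = Set.univ →
    ∃ V : Set (Set X), (∀ v ∈ V, IsOpen v) ∧ ⋃₀ V = Set.univ ∧
      (∀ v ∈ V, ∃ u ∈ U, v ⊆ u) ∧ ∀ x : X, {v ∈ V | x ∈ v}.encard ≤ n + 1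

set_option linter.unusedSectionVars false
set_option maxHeartbeats 1000000

open Metric

attribute [-instance] instTopologicalSpaceQuotient

universe u v

section Dim
variable {X : Type u} [MetricSpace X] {n : ℕ}

/-- relative dimension bound for a subset, in a form convenient for gluing -/
def PieceGood (A : Set X) (n : ℕ) : Prop :=
  ∀ (ι : Type u) (V : ι → Set X), (∀ i, IsOpen (V i)) → A ⊆ (⋃ i, V i) →
    ∃ T : Set (Set X × ι),
      (∀ p ∈ T, IsOpen p.1 ∧ p.1 ⊆ V p.2) ∧
      (A ⊆ ⋃ p ∈ T, p.1) ∧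
      (∀ x ∈ A, {p | p ∈ T ∧ x ∈ p.1}.encard ≤ n + 1)

lemma pieceGood_empty : PieceGood (∅ : Set X) n := by
  intro ι V _ _
  exact ⟨∅, by simp, by simp, by simp⟩

lemma pieceGood_mono {A B : Set X} (h : PieceGood A n) (hBA : B = A) : PieceGood B n := hBA ▸ h

/-- transfer of CoverDimLE along a homeomorphism -/
lemma CoverDimLE.of_homeomorph {Y : Type*} {Z : Type*} [TopologicalSpace Y] [TopologicalSpace Z]
    (e : Y ≃ₜ Z) (h : CoverDimLE Y n) : CoverDimLE Z n := by
  intro U hUo hUc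
  obtain ⟨V, hVo, hVc, hVr, hVm⟩ :=
    h ((fun u => e ⁻¹' u) '' U)
      (by rintro _ ⟨u, hu, rfl⟩; exact (hUo u hu).preimage e.continuous)
      (by
        apply eq_univ_of_forall
        intro y
        have : e y ∈ ⋃₀ U := hUc ▸ mem_univ _
        obtain ⟨u, hu, hy⟩ := this
        exact ⟨e ⁻¹' u, ⟨u, hu, rfl⟩, hy⟩)
  refine ⟨(fun v => e.symm ⁻¹' v) '' V, ?_, ?_, ?_, ?_⟩
  · rintro _ ⟨v, hv, rfl⟩; exact (hVo v hv).preimage e.symm.continuous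
  · apply eq_univ_of_forall
    intro z
    have : e.symm z ∈ ⋃₀ V := hVc ▸ mem_univ _
    obtain ⟨v, hv, hz⟩ := this
    exact ⟨e.symm ⁻¹' v, ⟨v, hv, rfl⟩, hz⟩
  · rintro _ ⟨v, hv, rfl⟩
    obtain ⟨_, ⟨u, hu, rfl⟩, hsub⟩ := hVr v hv
    refine ⟨u, hu, ?_⟩
    intro z hz
    have : e.symm z ∈ e ⁻¹' u := hsub hz
    simpa using this
  · intro z
    have key : {v | v ∈ (fun v => e.symm ⁻¹' v) '' V ∧ z ∈ v}
        ⊆ (fun v => e.symm ⁻¹' v) '' {v | v ∈ V ∧ e.symm z ∈ v} := by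
      rintro _ ⟨⟨v, hv, rfl⟩, hz⟩
      exact ⟨v, ⟨hv, hz⟩, rfl⟩
    calc {v | v ∈ (fun v => e.symm ⁻¹' v) '' V ∧ z ∈ v}.encard
        ≤ ((fun v => e.symm ⁻¹' v) '' {v | v ∈ V ∧ e.symm z ∈ v}).encard :=
          Set.encard_le_encard key
      _ ≤ {v | v ∈ V ∧ e.symm z ∈ v}.encard := Set.encard_image_le _ _
      _ ≤ n + 1 := hVm _

/-- closed subspace theorem -/
lemma coverDimLE_subtype_closed {A : Set X} (hA : IsClosed A) (h : CoverDimLE X n) :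
    CoverDimLE (↥A) n := by
  intro U hUo hUc
  rcases eq_empty_or_nonempty A with hAe | hAne
  · refine ⟨∅, by simp, ?_, by simp, by simp⟩
    have he : IsEmpty ↥A := by rw [hAe]; exact Set.isEmpty_coe_sort.mpr rfl
    have : (univ : Set ↥A) = ∅ := Set.univ_eq_empty_iff.mpr he
    rw [this]; simp
  -- choose ambient open for each u ∈ U
  have hch : ∀ u : Set ↥A, ∃ O : Set X, u ∈ U → (IsOpen O ∧ Subtype.val ⁻¹' O = u) := by
    intro u
    by_cases hu : u ∈ U
    · obtain ⟨O, hO, rfl⟩ := isOpen_induced_iff.mp (hUo u hu)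
      exact ⟨O, fun _ => ⟨hO, rfl⟩⟩
    · exact ⟨∅, fun h' => absurd h' hu⟩
  choose O hO using hch
  obtain ⟨u₀, hu₀⟩ : ∃ u, u ∈ U := by
    have := hUc ▸ mem_univ (⟨hAne.choose, hAne.choose_spec⟩ : ↥A)
    obtain ⟨u, hu, _⟩ := this; exact ⟨u, hu⟩
  set UU : Set (Set X) := (fun u => O u) '' U ∪ {Aᶜ} with hUU
  obtain ⟨V, hVo, hVc, hVr, hVm⟩ := h UU
    (by
      rintro _ (⟨u, hu, rfl⟩ | rfl)
      · exact (hO u hu).1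
      · exact hA.isOpen_compl)
    (by
      apply eq_univ_of_forall
      intro x
      by_cases hx : x ∈ A
      · have : (⟨x, hx⟩ : ↥A) ∈ ⋃₀ U := hUc ▸ mem_univ _
        obtain ⟨u, hu, hxu⟩ := this
        refine ⟨O u, Or.inl ⟨u, hu, rfl⟩, ?_⟩
        have := (hO u hu).2
        rw [← this] at hxu; exact hxu
      · exact ⟨Aᶜ, Or.inr rfl, hx⟩)
  classical
  -- target: preimages of members of V, with empty ones going anywhere
  refine ⟨(fun v => Subtype.val ⁻¹' v) '' V, ?_, ?_, ?_, ?_⟩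
  · rintro _ ⟨v, hv, rfl⟩; exact (hVo v hv).preimage continuous_subtype_val
  · apply eq_univ_of_forall
    rintro ⟨x, hx⟩
    have : x ∈ ⋃₀ V := hVc ▸ mem_univ _
    obtain ⟨v, hv, hxv⟩ := this
    exact ⟨Subtype.val ⁻¹' v, ⟨v, hv, rfl⟩, hxv⟩
  · rintro _ ⟨v, hv, rfl⟩
    obtain ⟨w, hw, hsub⟩ := hVr v hv
    rcases hw with ⟨u, hu, rfl⟩ | rfl
    · refine ⟨u, hu, ?_⟩
      rintro ⟨x, hx⟩ hxv
      have : x ∈ O u := hsub hxv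
      have h2 := (hO u hu).2
      rw [← h2]; exact this
    · refine ⟨u₀, hu₀, ?_⟩
      rintro ⟨x, hx⟩ hxv
      exact absurd hx (hsub hxv)
  · rintro ⟨x, hx⟩
    have key : {v | v ∈ (fun v => Subtype.val ⁻¹' v) '' V ∧ (⟨x, hx⟩ : ↥A) ∈ v}
        ⊆ (fun v => (Subtype.val ⁻¹' v : Set ↥A)) '' {v | v ∈ V ∧ x ∈ v} := by
      rintro _ ⟨⟨v, hv, rfl⟩, hxv⟩
      exact ⟨v, ⟨hv, hxv⟩, rfl⟩
    calc _ ≤ ((fun v => (Subtype.val ⁻¹' v : Set ↥A)) '' {v | v ∈ V ∧ x ∈ v}).encard :=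
          Set.encard_le_encard key
      _ ≤ {v | v ∈ V ∧ x ∈ v}.encard := Set.encard_image_le _ _
      _ ≤ n + 1 := hVm x

/-- from subspace dimension to PieceGood -/
lemma pieceGood_of_subtype {A : Set X} (h : CoverDimLE (↥A) n) : PieceGood A n := by
  classical
  intro ι V hVo hVc
  obtain ⟨W, hWo, hWc, hWr, hWm⟩ := h ((fun i => (Subtype.val ⁻¹' V i : Set ↥A)) '' univ)
    (by rintro _ ⟨i, -, rfl⟩; exact (hVo i).preimage continuous_subtype_val)
    (by
      apply eq_univ_of_forall
      rintro ⟨x, hx⟩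
      obtain ⟨_, ⟨i, rfl⟩, hxi⟩ := hVc hx
      exact ⟨Subtype.val ⁻¹' V i, ⟨i, mem_univ i, rfl⟩, hxi⟩)
  -- choose data for each w ∈ W
  have hch : ∀ w : {w : Set ↥A // w ∈ W}, ∃ q : Set X × ι, IsOpen q.1 ∧
      Subtype.val ⁻¹' q.1 = (w : Set ↥A) ∧ (w : Set ↥A) ⊆ Subtype.val ⁻¹' V q.2 := by
    rintro ⟨w, hw⟩
    obtain ⟨Ow, hOw, hOweq⟩ := isOpen_induced_iff.mp (hWo w hw)
    obtain ⟨_, ⟨i, -, rfl⟩, hsub⟩ := hWr w hw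
    exact ⟨(Ow, i), hOw, hOweq, hsub⟩
  choose q hq1 hq2 hq3 using hch
  set f : {w : Set ↥A // w ∈ W} → Set X × ι :=
    fun w => ((q w).1 ∩ V (q w).2, (q w).2) with hf
  refine ⟨f '' univ, ?_, ?_, ?_⟩
  · rintro _ ⟨w, -, rfl⟩
    exact ⟨(hq1 w).inter (hVo _), inter_subset_right⟩
  · intro x hx
    have : (⟨x, hx⟩ : ↥A) ∈ ⋃₀ W := hWc ▸ mem_univ _
    obtain ⟨w, hw, hxw⟩ := this
    refine mem_biUnion ⟨⟨w, hw⟩, mem_univ _, rfl⟩ ?_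
    constructor
    · have h2 := hq2 ⟨w, hw⟩
      have : (⟨x, hx⟩ : ↥A) ∈ Subtype.val ⁻¹' (q ⟨w, hw⟩).1 := by rw [h2]; exact hxw
      exact this
    · exact hq3 ⟨w, hw⟩ hxw
  · intro x hx
    have key : {p | p ∈ f '' univ ∧ x ∈ p.1}
        ⊆ f '' {w : {w : Set ↥A // w ∈ W} | (⟨x, hx⟩ : ↥A) ∈ (w : Set ↥A)} := by
      rintro _ ⟨⟨w, -, rfl⟩, hxp⟩
      refine ⟨w, ?_, rfl⟩
      have hx1 : x ∈ (q w).1 := hxp.1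
      have h2 := hq2 w
      show (⟨x, hx⟩ : ↥A) ∈ (w : Set ↥A)
      rw [← h2]; exact hx1
    have key2 : {w : {w : Set ↥A // w ∈ W} | (⟨x, hx⟩ : ↥A) ∈ (w : Set ↥A)}.encard
        ≤ {w | w ∈ W ∧ (⟨x, hx⟩ : ↥A) ∈ w}.encard := by
      have : {w | w ∈ W ∧ (⟨x, hx⟩ : ↥A) ∈ w}
          = Subtype.val '' {w : {w : Set ↥A // w ∈ W} | (⟨x, hx⟩ : ↥A) ∈ (w : Set ↥A)} := by
        ext v
        constructor
        · rintro ⟨hv, hxv⟩; exact ⟨⟨v, hv⟩, hxv, rfl⟩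
        · rintro ⟨⟨v', hv'⟩, hxv, rfl⟩; exact ⟨hv', hxv⟩
      rw [this]
      exact (Set.InjOn.encard_image (fun a _ b _ h => Subtype.ext h)).symm.le
    calc _ ≤ _ := Set.encard_le_encard key
      _ ≤ _ := Set.encard_image_le _ _
      _ ≤ {w | w ∈ W ∧ (⟨x, hx⟩ : ↥A) ∈ w}.encard := key2
      _ ≤ n + 1 := hWm _

/-- PieceGood univ gives CoverDimLE -/
lemma coverDimLE_of_pieceGood_univ (h : PieceGood (univ : Set X) n) : CoverDimLE X n := by
  intro U hUo hUc
  obtain ⟨T, hT1, hT2, hT3⟩ := h _ (fun u : ↥U => (u : Set X)) (fun i => hUo i i.2)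
    (by
      intro x _
      have : x ∈ ⋃₀ U := hUc ▸ mem_univ _
      obtain ⟨u, hu, hxu⟩ := this
      exact mem_iUnion.mpr ⟨⟨u, hu⟩, hxu⟩)
  refine ⟨Prod.fst '' T, ?_, ?_, ?_, ?_⟩
  · rintro _ ⟨p, hp, rfl⟩; exact (hT1 p hp).1
  · apply eq_univ_of_forall
    intro x
    obtain ⟨p, hp, hxp⟩ := mem_iUnion₂.mp (hT2 (mem_univ x))
    exact ⟨p.1, ⟨p, hp, rfl⟩, hxp⟩
  · rintro _ ⟨p, hp, rfl⟩
    exact ⟨p.2, p.2.2, (hT1 p hp).2⟩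
  · intro x
    have key : {v | v ∈ Prod.fst '' T ∧ x ∈ v} ⊆ Prod.fst '' {p | p ∈ T ∧ x ∈ p.1} := by
      rintro _ ⟨⟨p, hp, rfl⟩, hxp⟩
      exact ⟨p, ⟨hp, hxp⟩, rfl⟩
    calc _ ≤ _ := Set.encard_le_encard key
      _ ≤ {p | p ∈ T ∧ x ∈ p.1}.encard := Set.encard_image_le _ _
      _ ≤ n + 1 := hT3 x (mem_univ x)

lemma stepFix {A : Set X} (hA : IsClosed A) (hPG : PieceGood A n) {ι : Type u}
    (V : ι → Set X) (hVo : ∀ i, IsOpen (V i)) (hVc : ⋃ i, V i = univ) :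
    ∃ V' : ι → Set X, (∀ i, IsOpen (V' i)) ∧ (∀ i, V' i ⊆ V i) ∧ (⋃ i, V' i = univ) ∧
      ∀ x ∈ A, {i | x ∈ V' i}.encard ≤ n + 1 := by
  obtain ⟨T, hT1, hT2, hT3⟩ := hPG _ V hVo (hVc ▸ subset_univ A)
  refine ⟨fun i => (V i \ A) ∪ ⋃ p ∈ {p | p ∈ T ∧ p.2 = i}, (p : Set X × ι).1, ?_, ?_, ?_, ?_⟩
  · intro i
    refine IsOpen.union ((hVo i).sdiff hA) (isOpen_biUnion ?_)
    exact fun p hp => (hT1 p hp.1).1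
  · intro i x hx
    rcases hx with hx | hx
    · exact hx.1
    · obtain ⟨p, ⟨hpT, hpi⟩, hxp⟩ := mem_iUnion₂.mp hx
      exact hpi ▸ (hT1 p hpT).2 hxp
  · apply eq_univ_of_forall
    intro x
    by_cases hx : x ∈ A
    · obtain ⟨p, hp, hxp⟩ := mem_iUnion₂.mp (hT2 hx)
      exact mem_iUnion.mpr ⟨p.2, Or.inr (mem_biUnion ⟨hp, rfl⟩ hxp)⟩
    · have : x ∈ ⋃ i, V i := hVc ▸ mem_univ x
      obtain ⟨i, hi⟩ := mem_iUnion.mp this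
      exact mem_iUnion.mpr ⟨i, Or.inl ⟨hi, hx⟩⟩
  · intro x hxA
    have key : {i | x ∈ (V i \ A) ∪ ⋃ p ∈ {p | p ∈ T ∧ p.2 = i}, (p : Set X × ι).1}
        ⊆ Prod.snd '' {p | p ∈ T ∧ x ∈ p.1} := by
      intro i hi
      rcases hi with hi | hi
      · exact absurd hxA hi.2
      · obtain ⟨p, ⟨hpT, hpi⟩, hxp⟩ := mem_iUnion₂.mp hi
        exact ⟨p, ⟨hpT, hxp⟩, hpi⟩
    calc _ ≤ _ := Set.encard_le_encard key
      _ ≤ {p | p ∈ T ∧ x ∈ p.1}.encard := Set.encard_image_le _ _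
      _ ≤ n + 1 := hT3 x hxA

lemma propagate {ι : Type u} {V W : ι → Set X} (hVlf : LocallyFinite V)
    (hcl : ∀ i, closure (W i) ⊆ V i) (x : X) :
    ∃ N, IsOpen N ∧ x ∈ N ∧ ∀ y ∈ N, {i | y ∈ W i} ⊆ {i | x ∈ V i} := by
  obtain ⟨N₀, hN₀, hfin⟩ := hVlf x
  obtain ⟨N₁, hN₁sub, hN₁o, hxN₁⟩ := _root_.mem_nhds_iff.mp hN₀
  set S := {i ∈ {i | (V i ∩ N₀).Nonempty} | x ∉ V i} with hS
  have hSfin : S.Finite := hfin.subset (sep_subset _ _)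
  refine ⟨N₁ ∩ ⋂ i ∈ S, (closure (W i))ᶜ, ?_, ?_, ?_⟩
  · exact hN₁o.inter (hSfin.isOpen_biInter (fun i _ => isClosed_closure.isOpen_compl))
  · refine ⟨hxN₁, mem_biInter ?_⟩
    intro i hi
    exact fun hx => hi.2 ((hcl i) hx)
  · rintro y ⟨hyN₁, hyI⟩ i (hyW : y ∈ W i)
    have hiN₀ : (V i ∩ N₀).Nonempty := ⟨y, (hcl i) (subset_closure hyW), hN₁sub hyN₁⟩
    by_contra hxV
    have hiS : i ∈ S := ⟨hiN₀, hxV⟩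
    have := mem_iInter₂.mp hyI i hiS
    exact this (subset_closure hyW)

lemma engineStep {A : Set X} (hA : IsClosed A) (hPG : PieceGood A n) {ι : Type u}
    {V : ι → Set X} (hVo : ∀ i, IsOpen (V i)) (hVc : ⋃ i, V i = univ)
    (hVlf : LocallyFinite V) :
    ∃ W : ι → Set X, (∀ i, IsOpen (W i)) ∧ (⋃ i, W i = univ) ∧ (∀ i, W i ⊆ V i) ∧
      ∀ x ∈ A, x ∈ interior {y | {i | y ∈ W i}.encard ≤ n + 1} := by
  obtain ⟨V1, hV1o, hV1s, hV1c, hV1m⟩ := stepFix hA hPG V hVo hVc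
  have hV1lf : LocallyFinite V1 := hVlf.subset hV1s
  obtain ⟨W, hWc, hWo, hWcl⟩ := exists_subset_iUnion_closure_subset isClosed_univ hV1o
    (fun x _ => hV1lf.point_finite x) (by rw [hV1c])
  refine ⟨W, hWo, univ_subset_iff.mp hWc, fun i => (subset_closure.trans (hWcl i)).trans (hV1s i), ?_⟩
  intro x hxA
  obtain ⟨N, hNo, hxN, hN⟩ := propagate hV1lf hWcl x
  apply mem_interior.mpr
  refine ⟨N, ?_, hNo, hxN⟩
  intro y hy
  calc {i | y ∈ W i}.encard ≤ {i | x ∈ V1 i}.encard := Set.encard_le_encard (hN y hy)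
    _ ≤ n + 1 := hV1m x hxA

lemma engine {A : ℕ → Set X} (hcl : ∀ k, IsClosed (A k)) (hPG : ∀ k, PieceGood (A k) n)
    {ι : Type u} (V : ι → Set X) (hVo : ∀ i, IsOpen (V i)) (hVc : ⋃ i, V i = univ)
    (hVlf : LocallyFinite V) :
    ∃ W : ι → Set X, (∀ i, IsOpen (W i)) ∧ (∀ i, W i ⊆ V i) ∧
      ((⋃ k, A k) ⊆ ⋃ i, W i) ∧
      ∀ x ∈ ⋃ k, A k, {i | x ∈ W i}.encard ≤ n + 1 := by
  classical
  set Sub := {V' : ι → Set X // (∀ i, IsOpen (V' i)) ∧ (⋃ i, V' i = univ) ∧ ∀ i, V' i ⊆ V i}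
    with hSub
  set good : (ι → Set X) → Set X :=
    fun V' => interior {y | {i | y ∈ V' i}.encard ≤ n + 1} with hgood
  have step : ∀ (k : ℕ) (p : Sub), ∃ q : Sub, (∀ i, q.1 i ⊆ p.1 i) ∧ A k ⊆ good q.1 := by
    rintro k ⟨Vk, hko, hkc, hks⟩
    obtain ⟨W, hWo, hWc, hWs, hWg⟩ :=
      engineStep (hcl k) (hPG k) hko hkc (hVlf.subset hks)
    exact ⟨⟨W, hWo, hWc, fun i => (hWs i).trans (hks i)⟩, hWs, fun x hx => hWg x hx⟩
  choose f hf1 hf2 using step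
  set seq : ℕ → Sub := fun k => Nat.rec ⟨V, hVo, hVc, fun i => subset_rfl⟩
    (fun k ih => f k ih) k with hseq
  have hseqsucc : ∀ k, seq (k + 1) = f k (seq k) := fun k => rfl
  have hmono : ∀ {k m : ℕ}, k ≤ m → ∀ i, (seq m).1 i ⊆ (seq k).1 i := by
    intro k m hkm
    induction m with
    | zero => cases Nat.le_zero.mp hkm; exact fun i => subset_rfl
    | succ m ih =>
      rcases Nat.le_succ_iff.mp hkm with h | rfl
      · exact fun i => ((hf1 m (seq m)) i).trans (ih h i)
      · exact fun i => subset_rfl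
  refine ⟨fun i => ⋃ k, ((seq (k + 1)).1 i ∩ good (seq (k + 1)).1), ?_, ?_, ?_, ?_⟩
  · exact fun i => isOpen_iUnion (fun k => ((seq (k+1)).2.1 i).inter isOpen_interior)
  · intro i
    apply iUnion_subset
    intro k
    have h1 : (seq (k+1)).1 i ⊆ (seq 0).1 i := hmono (k := 0) (m := k+1) (Nat.zero_le _) i
    exact inter_subset_left.trans h1
  · intro x hx
    obtain ⟨k, hk⟩ := mem_iUnion.mp hx
    have hg : x ∈ good (seq (k+1)).1 := by
      rw [hseqsucc]; exact hf2 k (seq k) hk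
    have hcov := (seq (k+1)).2.2.1
    have : x ∈ ⋃ i, (seq (k+1)).1 i := by rw [hcov]; exact mem_univ x
    obtain ⟨i, hi⟩ := mem_iUnion.mp this
    exact mem_iUnion.mpr ⟨i, mem_iUnion.mpr ⟨k, hi, hg⟩⟩
  · intro x hx
    obtain ⟨k₀, hk₀⟩ := mem_iUnion.mp hx
    have hex : ∃ k, x ∈ good (seq (k+1)).1 := by
      refine ⟨k₀, ?_⟩
      rw [hseqsucc]; exact hf2 k₀ (seq k₀) hk₀
    set ks := Nat.find hex with hks
    have hxg : x ∈ good (seq (ks+1)).1 := Nat.find_spec hex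
    have key : {i | x ∈ ⋃ k, ((seq (k + 1)).1 i ∩ good (seq (k + 1)).1)}
        ⊆ {i | x ∈ (seq (ks+1)).1 i} := by
      intro i hi
      obtain ⟨k, hk1, hk2⟩ := mem_iUnion.mp hi
      have hkks : ks ≤ k := Nat.find_min' hex hk2
      exact hmono (Nat.succ_le_succ hkks) i hk1
    calc _ ≤ _ := Set.encard_le_encard key
      _ ≤ n + 1 := by
        have := interior_subset hxg
        exact this

lemma pieceGood_iUnion_nat {A : ℕ → Set X} (hcl : ∀ k, IsClosed (A k))
    (hPG : ∀ k, PieceGood (A k) n) (hU : IsClosed (⋃ k, A k)) :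
    PieceGood (⋃ k, A k) n := by
  classical
  intro ι V hVo hVc
  set V' : Option ι → Set X := fun o => Option.elim o ((⋃ k, A k)ᶜ) V with hV'
  have hV'o : ∀ o, IsOpen (V' o) := by
    rintro (_ | i)
    · exact hU.isOpen_compl
    · exact hVo i
  have hV'c : ⋃ o, V' o = univ := by
    apply eq_univ_of_forall
    intro x
    by_cases hx : x ∈ ⋃ k, A k
    · obtain ⟨i, hi⟩ := mem_iUnion.mp (hVc hx)
      exact mem_iUnion.mpr ⟨some i, hi⟩
    · exact mem_iUnion.mpr ⟨none, hx⟩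
  obtain ⟨V0, hV0o, hV0c, hV0lf, hV0s⟩ := precise_refinement V' hV'o hV'c
  obtain ⟨W, hWo, hWs, hWcov, hWm⟩ := engine hcl hPG V0 hV0o hV0c hV0lf
  refine ⟨(fun i : ι => (W (some i), i)) '' univ, ?_, ?_, ?_⟩
  · rintro _ ⟨i, -, rfl⟩
    exact ⟨hWo _, (hWs (some i)).trans (hV0s (some i))⟩
  · intro x hx
    obtain ⟨j, hj⟩ := mem_iUnion.mp (hWcov hx)
    cases j with
    | none =>
      exact absurd hx (((hWs none).trans (hV0s none)) hj)
    | some i =>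
      exact mem_biUnion ⟨i, mem_univ i, rfl⟩ hj
  · intro x hx
    have key : {p | p ∈ (fun i : ι => (W (some i), i)) '' univ ∧ x ∈ p.1}
        ⊆ (fun i : ι => (W (some i), i)) '' {i | x ∈ W (some i)} := by
      rintro _ ⟨⟨i, -, rfl⟩, hxp⟩
      exact ⟨i, hxp, rfl⟩
    have key2 : {i | x ∈ W (some i)}.encard ≤ {j | x ∈ W j}.encard := by
      have himg : {j | x ∈ W j} ⊇ some '' {i | x ∈ W (some i)} := by
        rintro _ ⟨i, hi, rfl⟩; exact hi
      calc {i | x ∈ W (some i)}.encard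
          = (some '' {i | x ∈ W (some i)}).encard :=
            (Set.InjOn.encard_image (fun a _ b _ h => Option.some_injective _ h)).symm
        _ ≤ _ := Set.encard_le_encard himg
    calc _ ≤ _ := Set.encard_le_encard key
      _ ≤ {i | x ∈ W (some i)}.encard := Set.encard_image_le _ _
      _ ≤ {j | x ∈ W j}.encard := key2
      _ ≤ n + 1 := hWm x hx

def DiscreteFam {J : Type*} (C : J → Set X) : Prop :=
  ∀ x : X, ∃ N ∈ nhds x, {j | (C j ∩ N).Nonempty}.Subsingleton

lemma DiscreteFam.mono {J : Type*} {C C' : J → Set X} (h : DiscreteFam C)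
    (hsub : ∀ j, C' j ⊆ C j) : DiscreteFam C' := by
  intro x
  obtain ⟨N, hN, hsing⟩ := h x
  exact ⟨N, hN, fun j₁ h₁ j₂ h₂ =>
    hsing (h₁.mono (inter_subset_inter_left _ (hsub j₁)))
          (h₂.mono (inter_subset_inter_left _ (hsub j₂)))⟩

lemma DiscreteFam.isClosed_iUnion {J : Type*} {C : J → Set X} (h : DiscreteFam C)
    (hcl : ∀ j, IsClosed (C j)) : IsClosed (⋃ j, C j) := by
  rw [← isOpen_compl_iff]
  rw [isOpen_iff_mem_nhds]
  intro x hx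
  obtain ⟨N, hN, hsing⟩ := h x
  by_cases hex : ∃ j₀, (C j₀ ∩ N).Nonempty
  · obtain ⟨j₀, hj₀⟩ := hex
    have hxj₀ : x ∉ C j₀ := fun hc => hx (mem_iUnion.mpr ⟨j₀, hc⟩)
    refine Filter.mem_of_superset (Filter.inter_mem hN ((hcl j₀).isOpen_compl.mem_nhds hxj₀)) ?_
    rintro y ⟨hyN, hyc⟩ hy
    obtain ⟨j, hj⟩ := mem_iUnion.mp hy
    have : j = j₀ := hsing ⟨y, hj, hyN⟩ hj₀
    exact hyc (this ▸ hj)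
  · refine Filter.mem_of_superset hN ?_
    intro y hyN hy
    obtain ⟨j, hj⟩ := mem_iUnion.mp hy
    exact hex ⟨j, y, hj, hyN⟩

lemma pieceGood_discrete_iUnion {J : Type u} {C : J → Set X} (hd : DiscreteFam C)
    (hPG : ∀ j, PieceGood (C j) n) : PieceGood (⋃ j, C j) n := by
  classical
  -- choose separation radii
  have hrad : ∀ x : X, ∃ ρ : ℝ, 0 < ρ ∧
      ∀ j₁ j₂, (C j₁ ∩ ball x ρ).Nonempty → (C j₂ ∩ ball x ρ).Nonempty → j₁ = j₂ := by
    intro x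
    obtain ⟨N, hN, hsing⟩ := hd x
    obtain ⟨ρ, hρ, hball⟩ := Metric.mem_nhds_iff.mp hN
    refine ⟨ρ, hρ, fun j₁ j₂ h₁ h₂ => hsing
      (h₁.mono (inter_subset_inter_right _ hball))
      (h₂.mono (inter_subset_inter_right _ hball))⟩
  choose ρ hρpos hρsep using hrad
  set G : J → Set X := fun j => ⋃ y ∈ C j, ball y (ρ y / 2) with hG
  have hGo : ∀ j, IsOpen (G j) := fun j => isOpen_biUnion (fun y _ => isOpen_ball)
  have hCG : ∀ j, C j ⊆ G j := fun j y hy =>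
    mem_biUnion hy (mem_ball_self (by linarith [hρpos y]))
  have hGsep : ∀ (j j₀ : J) (x : X), x ∈ C j₀ → x ∈ G j → j = j₀ := by
    intro j j₀ x hxC hxG
    obtain ⟨y, hyC, hxy⟩ := mem_iUnion₂.mp hxG
    have h₁ : (C j ∩ ball y (ρ y)).Nonempty := ⟨y, hyC, mem_ball_self (hρpos y)⟩
    have h₂ : (C j₀ ∩ ball y (ρ y)).Nonempty := by
      refine ⟨x, hxC, ?_⟩
      rw [mem_ball] at hxy ⊢
      rw [dist_comm] at hxy
      rw [dist_comm]
      linarith [hρpos y]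
    exact hρsep y j j₀ h₁ h₂
  intro ι V hVo hVc
  have hsub : ∀ j, C j ⊆ ⋃ i, V i := fun j => (subset_iUnion C j).trans hVc
  have hTT : ∀ j : J, ∃ T : Set (Set X × ι),
      (∀ p ∈ T, IsOpen p.1 ∧ p.1 ⊆ V p.2) ∧
      (C j ⊆ ⋃ p ∈ T, p.1) ∧
      (∀ x ∈ C j, {p | p ∈ T ∧ x ∈ p.1}.encard ≤ n + 1) :=
    fun j => hPG j _ V hVo (hsub j)
  choose TT hTT1 hTT2 hTT3 using hTT
  set f : J → Set X × ι → Set X × ι := fun j p => (p.1 ∩ G j, p.2) with hf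
  refine ⟨⋃ j, f j '' TT j, ?_, ?_, ?_⟩
  · rintro p hp
    obtain ⟨j, hj⟩ := mem_iUnion.mp hp
    obtain ⟨q, hq, rfl⟩ := hj
    exact ⟨((hTT1 j q hq).1).inter (hGo j), inter_subset_left.trans (hTT1 j q hq).2⟩
  · intro x hx
    obtain ⟨j, hj⟩ := mem_iUnion.mp hx
    obtain ⟨q, hq, hxq⟩ := mem_iUnion₂.mp (hTT2 j hj)
    exact mem_biUnion (mem_iUnion.mpr ⟨j, ⟨q, hq, rfl⟩⟩) ⟨hxq, hCG j hj⟩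
  · intro x hx
    obtain ⟨j₀, hj₀⟩ := mem_iUnion.mp hx
    have key : {p | p ∈ ⋃ j, f j '' TT j ∧ x ∈ p.1}
        ⊆ f j₀ '' {q | q ∈ TT j₀ ∧ x ∈ q.1} := by
      rintro p ⟨hp, hxp⟩
      obtain ⟨j, hj⟩ := mem_iUnion.mp hp
      obtain ⟨q, hq, rfl⟩ := hj
      have hxG : x ∈ G j := hxp.2
      have : j = j₀ := hGsep j j₀ x hj₀ hxG
      subst this
      exact ⟨q, ⟨hq, hxp.1⟩, rfl⟩
    calc _ ≤ _ := Set.encard_le_encard key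
      _ ≤ {q | q ∈ TT j₀ ∧ x ∈ q.1}.encard := Set.encard_image_le _ _
      _ ≤ n + 1 := hTT3 j₀ x hj₀

/-- Rudin's construction: σ-discrete open refinement of any open cover of a metric space. -/
lemma sigma_discrete_refinement {ι : Type u} (U : ι → Set X) (hUo : ∀ i, IsOpen (U i))
    (hUc : ⋃ i, U i = univ) :
    ∃ W : ℕ → ι → Set X, (∀ m i, IsOpen (W m i)) ∧ (∀ m i, W m i ⊆ U i) ∧
      (⋃ m, ⋃ i, W m i = univ) ∧
      ∀ m, DiscreteFam (fun i => W m i) := by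
  classical
  have hne : ∀ x : X, {i | x ∈ U i}.Nonempty := by
    intro x
    have : x ∈ ⋃ i, U i := hUc ▸ mem_univ x
    exact mem_iUnion.mp this
  haveI : IsWellOrder ι WellOrderingRel := WellOrderingRel.isWellOrder
  have hwf : WellFounded (WellOrderingRel : ι → ι → Prop) := IsWellFounded.wf
  set mu : X → ι := fun x => hwf.min {i | x ∈ U i} (hne x) with hmu
  have hmu_mem : ∀ x, x ∈ U (mu x) := fun x => hwf.min_mem _ (hne x)
  have hmu_min : ∀ x i, WellOrderingRel i (mu x) → x ∉ U i :=
    fun x i hri hx => hwf.not_lt_min _ hx hri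
  set c : ℕ → ℝ := fun m => (2⁻¹ : ℝ) ^ m with hc
  have hcpos : ∀ m, 0 < c m := fun m => pow_pos (by norm_num) m
  set mk : Set X → ℕ → ι → Set X := fun E m i =>
    ⋃ x ∈ {x | mu x = i ∧ ball x (c m) ⊆ U i ∧ x ∉ E}, ball x (c m / 4) with hmk
  set E : ℕ → Set X := fun m =>
    Nat.rec (∅ : Set X) (fun m Em => Em ∪ ⋃ i, mk Em m i) m with hE
  have hEsucc : ∀ m, E (m + 1) = E m ∪ ⋃ i, mk (E m) m i := fun m => rfl
  set W : ℕ → ι → Set X := fun m i => mk (E m) m i with hW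
  have hWopen : ∀ m i, IsOpen (W m i) := fun m i => isOpen_biUnion (fun x _ => isOpen_ball)
  have hWsub : ∀ m i, W m i ⊆ U i := by
    intro m i y hy
    obtain ⟨x, hx, hxy⟩ := mem_iUnion₂.mp hy
    refine hx.2.1 ?_
    have : c m / 4 ≤ c m := by linarith [hcpos m]
    exact (ball_subset_ball this) hxy
  -- key separation estimate
  have hsep : ∀ m i₁ i₂ (x₁ x₂ : X), i₁ ≠ i₂ →
      x₁ ∈ {x | mu x = i₁ ∧ ball x (c m) ⊆ U i₁ ∧ x ∉ E m} →
      x₂ ∈ {x | mu x = i₂ ∧ ball x (c m) ⊆ U i₂ ∧ x ∉ E m} →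
      c m ≤ dist x₁ x₂ := by
    intro m i₁ i₂ x₁ x₂ hne12 hx₁ hx₂
    rcases trichotomous_of WellOrderingRel i₁ i₂ with h | h | h
    · -- i₁ earlier: x₂ ∉ U i₁
      have hx₂not : x₂ ∉ U i₁ := hmu_min x₂ i₁ (hx₂.1 ▸ h)
      by_contra hlt
      push_neg at hlt
      exact hx₂not (hx₁.2.1 (mem_ball.mpr (by rwa [dist_comm])))
    · exact absurd h hne12
    · have hx₁not : x₁ ∉ U i₂ := hmu_min x₁ i₂ (hx₁.1 ▸ h)
      by_contra hlt
      push_neg at hlt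
      exact hx₁not (hx₂.2.1 (mem_ball.mpr hlt))
  refine ⟨W, hWopen, hWsub, ?_, ?_⟩
  · apply eq_univ_of_forall
    intro x
    by_contra hx
    have hxE : ∀ m, x ∉ E m := by
      intro m
      induction m with
      | zero => simp [hE]
      | succ m ih =>
        rw [hEsucc m]
        rintro (h | h)
        · exact ih h
        · obtain ⟨i, hi⟩ := mem_iUnion.mp h
          exact hx (mem_iUnion.mpr ⟨m, mem_iUnion.mpr ⟨i, hi⟩⟩)
    obtain ⟨ε, hε, hball⟩ := Metric.isOpen_iff.mp (hUo (mu x)) x (hmu_mem x)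
    obtain ⟨m, hm⟩ : ∃ m : ℕ, (2⁻¹ : ℝ) ^ m < ε := exists_pow_lt_of_lt_one hε (by norm_num)
    have hxW : x ∈ W m (mu x) := by
      apply mem_biUnion
      · exact ⟨rfl, (ball_subset_ball hm.le).trans hball, hxE m⟩
      · exact mem_ball_self (by linarith [hcpos m])
    exact hx (mem_iUnion.mpr ⟨m, mem_iUnion.mpr ⟨mu x, hxW⟩⟩)
  · intro m z
    refine ⟨ball z (c m / 8), ball_mem_nhds z (by linarith [hcpos m]), ?_⟩
    intro i₁ h₁ i₂ h₂
    by_contra hne12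
    obtain ⟨p₁, hp₁W, hp₁z⟩ := h₁
    obtain ⟨p₂, hp₂W, hp₂z⟩ := h₂
    obtain ⟨x₁, hx₁, hp₁x⟩ := mem_iUnion₂.mp hp₁W
    obtain ⟨x₂, hx₂, hp₂x⟩ := mem_iUnion₂.mp hp₂W
    have hd : c m ≤ dist x₁ x₂ := hsep m i₁ i₂ x₁ x₂ hne12 hx₁ hx₂
    have : dist x₁ x₂ < c m := by
      have d1 : dist x₁ p₁ < c m / 4 := by rw [dist_comm]; exact mem_ball.mp hp₁x
      have d2 : dist p₁ z < c m / 8 := mem_ball.mp hp₁z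
      have d3 : dist z p₂ < c m / 8 := by rw [dist_comm]; exact mem_ball.mp hp₂z
      have d4 : dist p₂ x₂ < c m / 4 := mem_ball.mp hp₂x
      calc dist x₁ x₂ ≤ dist x₁ p₁ + dist p₁ z + dist z p₂ + dist p₂ x₂ :=
            dist_triangle4 x₁ p₁ z x₂ |>.trans (by
              have := dist_triangle z p₂ x₂
              linarith [dist_triangle p₁ z x₂])
        _ < c m := by linarith [hcpos m]
    linarith
-- new material
lemma pieceGood_of_closed_subset {B N : Set X} (hBN : B ⊆ N) (hB : IsClosed B)
    (hN : CoverDimLE (↥N) n) : PieceGood B n := by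
  have hA' : IsClosed (Subtype.val ⁻¹' B : Set ↥N) := hB.preimage continuous_subtype_val
  have h1 : CoverDimLE ↥(Subtype.val ⁻¹' B : Set ↥N) n := coverDimLE_subtype_closed hA' hN
  have e : ↥(Subtype.val ⁻¹' B : Set ↥N) ≃ₜ ↥B :=
    { toFun := fun p => ⟨(p.1 : X), p.2⟩
      invFun := fun b => ⟨⟨(b : X), hBN b.2⟩, b.2⟩
      left_inv := fun p => by ext; rfl
      right_inv := fun b => rfl
      continuous_toFun := Continuous.subtype_mk (continuous_subtype_val.comp
        continuous_subtype_val) _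
      continuous_invFun := Continuous.subtype_mk (Continuous.subtype_mk
        continuous_subtype_val _) _ }
  exact pieceGood_of_subtype (CoverDimLE.of_homeomorph e h1)

lemma pieceGood_of_locally_good {A : Set X} (hA : IsClosed A)
    (h : ∀ a ∈ A, ∃ O N : Set X, IsOpen O ∧ a ∈ O ∧ O ⊆ N ∧ CoverDimLE (↥N) n) :
    PieceGood A n := by
  classical
  have h' : ∀ a : ↥A, ∃ q : Set X × Set X, IsOpen q.1 ∧ (a : X) ∈ q.1 ∧ q.1 ⊆ q.2 ∧
      CoverDimLE (↥q.2) n := by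
    rintro ⟨a, ha⟩
    obtain ⟨O, N, h1, h2, h3, h4⟩ := h a ha
    exact ⟨(O, N), h1, h2, h3, h4⟩
  choose q hq1 hq2 hq3 hq4 using h'
  set U' : (↥A ⊕ PUnit.{u+1}) → Set X := Sum.elim (fun a => (q a).1) (fun _ => Aᶜ) with hU'
  have hU'o : ∀ i, IsOpen (U' i) := by
    rintro (a | _)
    · exact hq1 a
    · exact hA.isOpen_compl
  have hU'c : ⋃ i, U' i = univ := by
    apply eq_univ_of_forall
    intro x
    by_cases hx : x ∈ A
    · exact mem_iUnion.mpr ⟨Sum.inl ⟨x, hx⟩, hq2 ⟨x, hx⟩⟩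
    · exact mem_iUnion.mpr ⟨Sum.inr PUnit.unit, hx⟩
  obtain ⟨W, hWo, hWs, hWc, hWd⟩ := sigma_discrete_refinement U' hU'o hU'c
  set C : ℕ → ℕ → (↥A ⊕ PUnit.{u+1}) → Set X := fun m l i =>
    A ∩ ⋂ y ∈ (W m i)ᶜ, {x | 1 / (l + 1 : ℝ) ≤ dist x y} with hC
  have hCcl : ∀ m l i, IsClosed (C m l i) := by
    intro m l i
    refine hA.inter (isClosed_biInter fun y _ => ?_)
    exact isClosed_le continuous_const (Continuous.dist continuous_id continuous_const)
  have hCW : ∀ m l i, C m l i ⊆ W m i := by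
    intro m l i x hx
    by_contra hxW
    have := mem_iInter₂.mp hx.2 x hxW
    simp only [mem_setOf_eq, dist_self] at this
    have hpos : (0 : ℝ) < 1 / (l + 1 : ℝ) := by positivity
    linarith
  have hCPG : ∀ m l i, PieceGood (C m l i) n := by
    rintro m l (a | u)
    · refine pieceGood_of_closed_subset ?_ (hCcl m l _) (hq4 a)
      exact (hCW m l _).trans ((hWs m _).trans (hq3 a))
    · have : C m l (Sum.inr u) = ∅ := by
        apply eq_empty_of_forall_notMem
        intro x hx
        exact ((hWs m _) ((hCW m l _) hx)) hx.1
      exact pieceGood_mono pieceGood_empty this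
  set P : ℕ → ℕ → Set X := fun m l => ⋃ i, C m l i with hP
  have hPd : ∀ m l, DiscreteFam (fun i => C m l i) :=
    fun m l => (hWd m).mono (fun i => hCW m l i)
  have hPcl : ∀ m l, IsClosed (P m l) := fun m l => (hPd m l).isClosed_iUnion
    (fun i => hCcl m l i)
  have hPPG : ∀ m l, PieceGood (P m l) n := fun m l =>
    pieceGood_discrete_iUnion (hPd m l) (fun i => hCPG m l i)
  have hPA : ∀ m l, P m l ⊆ A := by
    intro m l x hx
    obtain ⟨i, hi⟩ := mem_iUnion.mp hx
    exact hi.1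
  have hcov : A ⊆ ⋃ m, ⋃ l, P m l := by
    intro x hx
    have : x ∈ ⋃ m, ⋃ i, W m i := hWc ▸ mem_univ x
    obtain ⟨m, hm⟩ := mem_iUnion.mp this
    obtain ⟨i, hi⟩ := mem_iUnion.mp hm
    obtain ⟨ε, hε, hball⟩ := Metric.isOpen_iff.mp (hWo m i) x hi
    obtain ⟨l, hl⟩ := exists_nat_one_div_lt hε
    refine mem_iUnion.mpr ⟨m, mem_iUnion.mpr ⟨l, mem_iUnion.mpr ⟨i, ⟨hx, ?_⟩⟩⟩⟩
    apply mem_biInter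
    intro y hy
    simp only [mem_setOf_eq]
    by_contra hd
    push_neg at hd
    apply hy
    apply hball
    rw [mem_ball, dist_comm]
    calc dist x y < 1 / (l + 1 : ℝ) := hd
      _ < ε := hl
  -- reindex over ℕ
  set e : ℕ ≃ ℕ × ℕ := (Denumerable.eqv (ℕ × ℕ)).symm with he
  have hAeq : A = ⋃ k, P (e k).1 (e k).2 := by
    apply Subset.antisymm
    · intro x hx
      obtain ⟨m, hm⟩ := mem_iUnion.mp (hcov hx)
      obtain ⟨l, hl⟩ := mem_iUnion.mp hm
      exact mem_iUnion.mpr ⟨e.symm (m, l), by simp [he]; simpa using hl⟩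
    · intro x hx
      obtain ⟨k, hk⟩ := mem_iUnion.mp hx
      exact hPA _ _ hk
  have := pieceGood_iUnion_nat (A := fun k => P (e k).1 (e k).2)
    (fun k => hPcl _ _) (fun k => hPPG _ _) (hAeq ▸ hA)
  exact pieceGood_mono this hAeq


end Dim

section QuotMetric
variable {X : Type*} [MetricSpace X] {G : Type*} [Group G] [Finite G] [MulAction G X]

variable (G) in
/-- orbit distance -/
noncomputable def odist (x y : X) : ℝ := ⨅ g : G, dist x (g • y)

lemma dist_smul_smul (hiso : ∀ g : G, Isometry fun z : X => g • z) (g : G) (x y : X) :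
    dist (g • x) (g • y) = dist x y := (hiso g).dist_eq x y

omit [Finite G] in
lemma odist_le (x y : X) (g : G) : odist G x y ≤ dist x (g • y) := by
  have : Nonempty G := One.instNonempty
  exact ciInf_le ⟨0, by rintro r ⟨g, rfl⟩; positivity⟩ g

lemma odist_exists (x y : X) : ∃ g : G, odist G x y = dist x (g • y) := by
  have : Nonempty G := One.instNonempty
  obtain ⟨g, hg⟩ := Finite.exists_min (fun g : G => dist x (g • y))
  exact ⟨g, le_antisymm (odist_le x y g) (le_ciInf hg)⟩

lemma odist_nonneg (x y : X) : 0 ≤ odist G x y := by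
  obtain ⟨g, hg⟩ := odist_exists (G := G) x y
  rw [hg]; positivity

lemma odist_le_dist (x y : X) : odist G x y ≤ dist x y := by
  simpa using odist_le (G := G) x y 1

lemma odist_smul_right (x y : X) (h : G) : odist G x (h • y) = odist G x y := by
  apply le_antisymm
  · obtain ⟨g, hg⟩ := odist_exists (G := G) x y
    have h2 := odist_le (G := G) x (h • y) (g * h⁻¹)
    rw [smul_smul, inv_mul_cancel_right] at h2
    rw [← hg] at h2; exact h2
  · obtain ⟨g, hg⟩ := odist_exists (G := G) x (h • y)
    have h2 := odist_le (G := G) x y (g * h)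
    rw [← smul_smul, ← hg] at h2; exact h2

lemma odist_comm (hiso : ∀ g : G, Isometry fun z : X => g • z) (x y : X) :
    odist G x y = odist G y x := by
  have key : ∀ a b : X, odist G b a ≤ odist G a b := by
    intro a b
    obtain ⟨g, hg⟩ := odist_exists (G := G) a b
    have h2 := odist_le (G := G) b a g⁻¹
    have he : dist b (g⁻¹ • a) = dist a (g • b) := by
      rw [← dist_smul_smul hiso g b (g⁻¹ • a), smul_inv_smul, dist_comm]
    rw [he, ← hg] at h2; exact h2
  exact le_antisymm (key y x) (key x y)

lemma odist_smul_left (hiso : ∀ g : G, Isometry fun z : X => g • z) (x y : X) (h : G) :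
    odist G (h • x) y = odist G x y := by
  rw [odist_comm hiso, odist_smul_right, odist_comm hiso]

lemma odist_triangle (hiso : ∀ g : G, Isometry fun z : X => g • z) (x y z : X) :
    odist G x z ≤ odist G x y + odist G y z := by
  obtain ⟨g, hg⟩ := odist_exists (G := G) x y
  obtain ⟨h, hh⟩ := odist_exists (G := G) y z
  have h1 : odist G x z ≤ dist x ((g * h) • z) := odist_le (G := G) x z (g * h)
  have h2 : dist x ((g * h) • z) ≤ dist x (g • y) + dist (g • y) ((g * h) • z) :=
    dist_triangle _ _ _
  have h3 : dist (g • y) ((g * h) • z) = dist y (h • z) := by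
    rw [← smul_smul]; exact dist_smul_smul hiso g y (h • z)
  rw [hg, hh]; linarith

lemma odist_self' (x : X) : odist G x x = 0 :=
  le_antisymm (by simpa using odist_le (G := G) x x 1) (odist_nonneg x x)

lemma odist_congr (hiso : ∀ g : G, Isometry fun z : X => g • z) {x x' y y' : X}
    (hx : (MulAction.orbitRel G X) x x') (hy : (MulAction.orbitRel G X) y y') :
    odist G x y = odist G x' y' := by
  obtain ⟨g, (hg : g • x' = x)⟩ := hx
  obtain ⟨h, (hh : h • y' = y)⟩ := hy
  rw [← hg, ← hh, odist_smul_left hiso, odist_smul_right]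

variable (G X) in
noncomputable def quotMS (hiso : ∀ g : G, Isometry fun z : X => g • z) :
    MetricSpace (Quotient (MulAction.orbitRel G X)) :=
  { dist := Quotient.lift₂ (odist G)
      (fun _ _ _ _ hx hy => odist_congr hiso hx hy)
    dist_self := fun q => Quotient.inductionOn q fun x => odist_self' x
    dist_comm := fun q q' => Quotient.inductionOn₂ q q' fun x y => odist_comm hiso x y
    dist_triangle := fun q q' q'' =>
      Quotient.inductionOn₃ q q' q'' fun x y z => odist_triangle hiso x y z
    eq_of_dist_eq_zero := by
      intro q q' h
      induction q using Quotient.inductionOn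
      induction q' using Quotient.inductionOn
      rename_i x y
      obtain ⟨g, hg⟩ := odist_exists (G := G) x y
      have h0 : odist G x y = 0 := h
      rw [h0] at hg
      have : dist x (g • y) = 0 := hg.symm
      rw [dist_eq_zero] at this
      exact Quotient.sound ⟨g, this.symm⟩ }

end QuotMetric

section QuotAPI
variable {X : Type u} [MetricSpace X] {G : Type v} [Group G] [Finite G] [MulAction G X]

variable (G) in
def qmk (x : X) : Quotient (MulAction.orbitRel G X) := Quotient.mk (MulAction.orbitRel G X) x

lemma qmk_surjective : Function.Surjective (qmk G (X := X)) :=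
  fun q => Quotient.inductionOn q (fun x => ⟨x, rfl⟩)

lemma qmk_eq_of_smul (g : G) (x : X) : qmk G (g • x) = qmk G x :=
  Quotient.sound ⟨g, rfl⟩

variable [mQ : MetricSpace (Quotient (MulAction.orbitRel G X))]

lemma qdist_mk (hiso : ∀ g : G, Isometry fun z : X => g • z)
    (hm : mQ = quotMS X G hiso) (x y : X) :
    dist (qmk G x) (qmk G y) = odist G x y := by subst hm; rfl

lemma qdist_le_dist (hiso : ∀ g : G, Isometry fun z : X => g • z)
    (hm : mQ = quotMS X G hiso) (x y : X) :
    dist (qmk G x) (qmk G y) ≤ dist x y := by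
  rw [qdist_mk hiso hm]; exact odist_le_dist x y

lemma qdist_exists (hiso : ∀ g : G, Isometry fun z : X => g • z)
    (hm : mQ = quotMS X G hiso) (x y : X) :
    ∃ g : G, dist (qmk G x) (qmk G y) = dist x (g • y) := by
  rw [qdist_mk hiso hm]; exact odist_exists x y

lemma qdist_le (hiso : ∀ g : G, Isometry fun z : X => g • z)
    (hm : mQ = quotMS X G hiso) (x y : X) (g : G) :
    dist (qmk G x) (qmk G y) ≤ dist x (g • y) := by
  rw [qdist_mk hiso hm]; exact odist_le x y g

lemma qmk_continuous (hiso : ∀ g : G, Isometry fun z : X => g • z)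
    (hm : mQ = quotMS X G hiso) : Continuous (qmk G (X := X)) := by
  refine Metric.continuous_iff.mpr ?_
  intro x ε hε
  exact ⟨ε, hε, fun y hy => lt_of_le_of_lt (qdist_le_dist hiso hm y x) hy⟩

lemma qmk_ball (hiso : ∀ g : G, Isometry fun z : X => g • z)
    (hm : mQ = quotMS X G hiso) (z : X) (r : ℝ) :
    qmk G '' ball z r = ball (qmk G z) r := by
  apply Subset.antisymm
  · rintro _ ⟨y, hy, rfl⟩
    rw [mem_ball] at hy ⊢
    calc dist (qmk G y) (qmk G z) ≤ dist y z := qdist_le_dist hiso hm y z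
      _ < r := hy
  · intro q hq
    obtain ⟨w, rfl⟩ := qmk_surjective (G := G) q
    rw [mem_ball, dist_comm] at hq
    obtain ⟨g, hg⟩ := qdist_exists hiso hm z w
    refine ⟨g • w, ?_, qmk_eq_of_smul g w⟩
    rw [mem_ball, dist_comm]
    rw [hg] at hq; exact hq

lemma qmk_isOpenMap (hiso : ∀ g : G, Isometry fun z : X => g • z)
    (hm : mQ = quotMS X G hiso) : IsOpenMap (qmk G (X := X)) := by
  intro O hO
  refine Metric.isOpen_iff.mpr ?_
  rintro _ ⟨w, hw, rfl⟩
  obtain ⟨ε, hε, hball⟩ := Metric.isOpen_iff.mp hO w hw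
  refine ⟨ε, hε, ?_⟩
  rw [← qmk_ball hiso hm]
  exact image_mono hball

variable (G) in
/-- the fixed-point set -/
def fixSet : Set X := {x : X | ∀ g : G, g • x = x}

lemma fixSet_closed (hiso : ∀ g : G, Isometry fun z : X => g • z) :
    IsClosed (fixSet G (X := X)) := by
  have : fixSet G (X := X) = ⋂ g : G, {x : X | g • x = x} := by
    ext x; simp [fixSet, mem_iInter]
  rw [this]
  exact isClosed_iInter (fun g => isClosed_eq (hiso g).continuous continuous_id)

lemma mem_qmk_fixSet_iff (w : X) :
    qmk G w ∈ qmk G '' fixSet G ↔ w ∈ fixSet G := by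
  constructor
  · rintro ⟨c, hc, hcw⟩
    obtain ⟨g, (hg : g • c = w)⟩ := Quotient.exact hcw.symm
    have hw : w = c := by rw [← hg, hc g]
    rw [hw]; exact hc
  · intro hw; exact ⟨w, hw, rfl⟩

/-- the tube argument: dimension of the quotient bounds the dimension of the total space -/
lemma easyDir (hiso : ∀ g : G, Isometry fun z : X => g • z)
    (hm : mQ = quotMS X G hiso) {n : ℕ}
    (hQ : CoverDimLE (Quotient (MulAction.orbitRel G X)) n) : CoverDimLE X n := by
  classical
  intro U hUo hUc
  have hrad : ∀ w : X, ∃ ε : ℝ, 0 < ε ∧ ∃ u ∈ U, ball w ε ⊆ u := by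
    intro w
    have : w ∈ ⋃₀ U := hUc ▸ mem_univ w
    obtain ⟨u, hu, hwu⟩ := this
    obtain ⟨ε, hε, hball⟩ := Metric.isOpen_iff.mp (hUo u hu) w hwu
    exact ⟨ε, hε, u, hu, hball⟩
  choose ε hε uu huu hball using hrad
  have hρ : ∀ z : X, ∃ ρ : ℝ, 0 < ρ ∧ (∀ g : G, ρ ≤ ε (g • z)) ∧
      (∀ g g' : G, g • z ≠ g' • z → 2 * ρ ≤ dist (g • z) (g' • z)) := by
    intro z
    obtain ⟨g₀, hg₀⟩ := Finite.exists_min (fun g : G => ε (g • z))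
    by_cases hsep : ∃ g : G, g • z ≠ z
    · haveI : Nonempty {g : G // g • z ≠ z} := ⟨⟨hsep.choose, hsep.choose_spec⟩⟩
      obtain ⟨g₁, hg₁⟩ := Finite.exists_min (fun g : {g : G // g • z ≠ z} => dist z ((g : G) • z))
      set d := dist z ((g₁ : G) • z) with hd_def
      have hd : 0 < d := dist_pos.mpr (fun h => g₁.2 h.symm)
      refine ⟨min (ε (g₀ • z)) (d / 3), lt_min (hε _) (by linarith), ?_, ?_⟩
      · intro g
        exact (min_le_left _ _).trans (hg₀ g)
      · intro g g' hne
        have key : d ≤ dist (g • z) (g' • z) := by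
          have hne' : (g⁻¹ * g') • z ≠ z := by
            intro h
            apply hne
            have h2 : g • ((g⁻¹ * g') • z) = g • z := by rw [h]
            rw [smul_smul, mul_inv_cancel_left] at h2
            exact h2.symm
          have := hg₁ ⟨g⁻¹ * g', hne'⟩
          have heq : dist (g • z) (g' • z) = dist z ((g⁻¹ * g') • z) := by
            rw [← (hiso g⁻¹).dist_eq (g • z) (g' • z)]
            simp only [inv_smul_smul]
            rw [smul_smul]
          rw [heq]
          exact this
        have : 2 * min (ε (g₀ • z)) (d / 3) ≤ 2 * (d / 3) := by
          have := min_le_right (ε (g₀ • z)) (d / 3); linarith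
        linarith
    · push_neg at hsep
      refine ⟨ε (g₀ • z), hε _, fun g => hg₀ g, ?_⟩
      intro g g' hne
      exact absurd (by rw [hsep g, hsep g']) hne
  choose ρ hρpos hρε hρsep using hρ
  -- cover the quotient by small balls
  obtain ⟨W, hWo, hWc, hWr, hWm⟩ := hQ ((fun z : X => ball (qmk G z) (ρ z)) '' univ)
    (by rintro _ ⟨z, -, rfl⟩; exact isOpen_ball)
    (by
      apply eq_univ_of_forall
      intro q
      obtain ⟨w, rfl⟩ := qmk_surjective (G := G) q
      exact ⟨ball (qmk G w) (ρ w), ⟨w, mem_univ w, rfl⟩, mem_ball_self (hρpos w)⟩)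
  have hz : ∀ w : ↥W, ∃ z : X, (w : Set (Quotient (MulAction.orbitRel G X)))
      ⊆ ball (qmk G z) (ρ z) := by
    rintro ⟨w, hw⟩
    obtain ⟨_, ⟨z, -, rfl⟩, hsub⟩ := hWr w hw
    exact ⟨z, hsub⟩
  choose zc hzc using hz
  set V : Set (Set X) :=
    ⋃ w : ↥W, range (fun g : G =>
      qmk G ⁻¹' (w : Set (Quotient (MulAction.orbitRel G X))) ∩ ball (g • zc w) (ρ (zc w)))
    with hV
  refine ⟨V, ?_, ?_, ?_, ?_⟩
  · intro v hv
    obtain ⟨w, hw⟩ := mem_iUnion.mp hv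
    obtain ⟨g, rfl⟩ := hw
    exact ((hWo _ w.2).preimage (qmk_continuous hiso hm)).inter isOpen_ball
  · apply eq_univ_of_forall
    intro x
    have : qmk G x ∈ ⋃₀ W := hWc ▸ mem_univ _
    obtain ⟨w, hw, hxw⟩ := this
    have hxball := hzc ⟨w, hw⟩ hxw
    rw [mem_ball, dist_comm] at hxball
    obtain ⟨g, hg⟩ := qdist_exists hiso hm (zc ⟨w, hw⟩) x
    rw [hg] at hxball
    have hx2 : x ∈ ball (g⁻¹ • zc ⟨w, hw⟩) (ρ (zc ⟨w, hw⟩)) := by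
      rw [mem_ball, dist_comm]
      have heq : dist (g⁻¹ • zc ⟨w, hw⟩) x = dist (zc ⟨w, hw⟩) (g • x) := by
        rw [← (hiso g).dist_eq (g⁻¹ • zc ⟨w, hw⟩) x, smul_inv_smul]
      rw [heq]
      exact hxball
    refine mem_sUnion.mpr ⟨_, mem_iUnion.mpr ⟨⟨w, hw⟩, mem_range_self g⁻¹⟩, hxw, hx2⟩
  · intro v hv
    obtain ⟨w, hw⟩ := mem_iUnion.mp hv
    obtain ⟨g, rfl⟩ := hw
    refine ⟨uu (g • zc w), huu _, ?_⟩
    refine inter_subset_right.trans ?_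
    refine (ball_subset_ball (hρε (zc w) g)).trans (hball _)
  · intro x
    set P : ↥W → Set X := fun w =>
      if h : ∃ g : G, x ∈ ball (g • zc w) (ρ (zc w)) then
        qmk G ⁻¹' (w : Set (Quotient (MulAction.orbitRel G X)))
          ∩ ball (h.choose • zc w) (ρ (zc w))
      else ∅ with hP
    have key : {v | v ∈ V ∧ x ∈ v}
        ⊆ P '' {w : ↥W | qmk G x ∈ (w : Set (Quotient (MulAction.orbitRel G X)))} := by
      rintro v ⟨hv, hxv⟩
      obtain ⟨w, hw⟩ := mem_iUnion.mp hv
      obtain ⟨g, rfl⟩ := hw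
      have hex : ∃ g : G, x ∈ ball (g • zc w) (ρ (zc w)) := ⟨g, hxv.2⟩
      refine ⟨w, hxv.1, ?_⟩
      rw [hP]
      simp only [dif_pos hex]
      have hsame : hex.choose • zc w = g • zc w := by
        by_contra hne
        have h2 := hρsep (zc w) hex.choose g hne
        have d1 : dist x (hex.choose • zc w) < ρ (zc w) := mem_ball.mp hex.choose_spec
        have d2 : dist x (g • zc w) < ρ (zc w) := mem_ball.mp hxv.2
        have htr : dist (hex.choose • zc w) (g • zc w)
            ≤ dist (hex.choose • zc w) x + dist x (g • zc w) := dist_triangle _ _ _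
        have d1' : dist (hex.choose • zc w) x < ρ (zc w) := by rw [dist_comm]; exact d1
        linarith
      rw [hsame]
    have key2 : {w : ↥W | qmk G x ∈ (w : Set (Quotient (MulAction.orbitRel G X)))}.encard
        ≤ {w | w ∈ W ∧ qmk G x ∈ w}.encard := by
      have heq : {w | w ∈ W ∧ qmk G x ∈ w}
          = Subtype.val '' {w : ↥W | qmk G x ∈ (w : Set (Quotient (MulAction.orbitRel G X)))} := by
        ext v
        constructor
        · rintro ⟨hv, hxv⟩; exact ⟨⟨v, hv⟩, hxv, rfl⟩
        · rintro ⟨⟨v', hv'⟩, hxv, rfl⟩; exact ⟨hv', hxv⟩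
      rw [heq]
      exact (Set.InjOn.encard_image (fun a _ b _ h => Subtype.ext h)).symm.le
    calc {v | v ∈ V ∧ x ∈ v}.encard ≤ _ := Set.encard_le_encard key
      _ ≤ {w : ↥W | qmk G x ∈ (w : Set (Quotient (MulAction.orbitRel G X)))}.encard :=
          Set.encard_image_le _ _
      _ ≤ {w | w ∈ W ∧ qmk G x ∈ w}.encard := key2
      _ ≤ n + 1 := hWm (qmk G x)

lemma isClosed_qmk_fixSet (hiso : ∀ g : G, Isometry fun z : X => g • z)
    (hm : mQ = quotMS X G hiso) :
    IsClosed (qmk G '' fixSet G : Set (Quotient (MulAction.orbitRel G X))) := by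
  rw [← isOpen_compl_iff]
  refine Metric.isOpen_iff.mpr ?_
  intro q hq
  obtain ⟨w, rfl⟩ := qmk_surjective (G := G) q
  have hw : w ∉ fixSet G := fun h => hq ⟨w, h, rfl⟩
  rcases eq_empty_or_nonempty (fixSet G : Set X) with hE | hne
  · refine ⟨1, one_pos, ?_⟩
    intro q' _
    simp only [mem_compl_iff]
    rw [hE]
    rintro ⟨c, hc, rfl⟩
    exact notMem_empty c hc
  · have hz : infDist w (fixSet G) ≠ 0 := by
      intro h0
      exact hw (((fixSet_closed hiso).mem_iff_infDist_zero hne).mpr h0)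
    have hpos : 0 < infDist w (fixSet G) := lt_of_le_of_ne (infDist_nonneg) (Ne.symm hz)
    refine ⟨infDist w (fixSet G), hpos, ?_⟩
    intro q' hq'
    simp only [mem_compl_iff]
    rintro ⟨c, hc, rfl⟩
    rw [mem_ball] at hq'
    obtain ⟨g, hg⟩ := qdist_exists hiso hm w c
    rw [dist_comm] at hq'
    rw [hg] at hq'
    rw [hc g] at hq'
    exact absurd hq' (not_lt.mpr (infDist_le_dist_of_mem hc))

lemma fixPart_dim (hiso : ∀ g : G, Isometry fun z : X => g • z)
    (hm : mQ = quotMS X G hiso) {n : ℕ} (hX : CoverDimLE X n) :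
    CoverDimLE ↥(qmk G '' fixSet G : Set (Quotient (MulAction.orbitRel G X))) n := by
  have hdimC : CoverDimLE ↥(fixSet G : Set X) n :=
    coverDimLE_subtype_closed (fixSet_closed hiso) hX
  set f : ↥(fixSet G : Set X) → ↥(qmk G '' fixSet G : Set (Quotient (MulAction.orbitRel G X))) :=
    fun c => ⟨qmk G c.1, ⟨c.1, c.2, rfl⟩⟩ with hf
  have hbij : Function.Bijective f := by
    constructor
    · rintro ⟨c, hc⟩ ⟨c', hc'⟩ hcc
      have : qmk G c = qmk G c' := congrArg Subtype.val hcc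
      obtain ⟨g, (hg : g • c' = c)⟩ := Quotient.exact this
      apply Subtype.ext
      show c = c'
      rw [← hg, hc' g]
    · rintro ⟨q, c, hc, rfl⟩
      exact ⟨⟨c, hc⟩, rfl⟩
  have hisom : Isometry f := by
    apply Isometry.of_dist_eq
    rintro ⟨c, hc⟩ ⟨c', hc'⟩
    rw [Subtype.dist_eq, Subtype.dist_eq]
    show dist (qmk G c) (qmk G c') = dist c c'
    obtain ⟨g, hg⟩ := qdist_exists hiso hm c c'
    rw [hg, hc' g]
  exact CoverDimLE.of_homeomorph
    (IsometryEquiv.mk (Equiv.ofBijective f hbij) hisom).toHomeomorph hdimC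

lemma chart_dim (hiso : ∀ g : G, Isometry fun z : X => g • z)
    (hm : mQ = quotMS X G hiso) {n : ℕ} (hX : CoverDimLE X n)
    (IH : ∀ (X' : Type u) [MetricSpace X'] (G' : Type v) [Group G'] [Finite G']
      [MulAction G' X'] (hiso' : ∀ g : G', Isometry fun z : X' => g • z),
      Nat.card G' < Nat.card G → CoverDimLE X' n →
      @CoverDimLE (Quotient (MulAction.orbitRel G' X'))
        (quotMS X' G' hiso').toUniformSpace.toTopologicalSpace n)
    {w : X} (hw : w ∉ fixSet G) :
    ∃ O N : Set (Quotient (MulAction.orbitRel G X)), IsOpen O ∧ qmk G w ∈ O ∧ O ⊆ N ∧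
      CoverDimLE ↥N n := by
  classical
  have hex : ∃ g : G, g • w ≠ w := by
    by_contra hc
    push_neg at hc
    exact hw hc
  haveI hSne : Nonempty {g : G // g • w ≠ w} := ⟨⟨hex.choose, hex.choose_spec⟩⟩
  obtain ⟨g₁, hg₁⟩ := Finite.exists_min (fun g : {g : G // g • w ≠ w} => dist ((g : G) • w) w)
  set s := dist ((g₁ : G) • w) w with hs_def
  have hs : 0 < s := dist_pos.mpr g₁.2
  have hsep : ∀ g : G, g • w ≠ w → s ≤ dist (g • w) w := fun g hg => hg₁ ⟨g, hg⟩
  set r := s / 8 with hr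
  have hrpos : 0 < r := by positivity
  set K := closedBall w r with hK
  have hKdim : CoverDimLE ↥K n := coverDimLE_subtype_closed isClosed_closedBall hX
  set H := MulAction.stabilizer G w with hH
  have hsmulmem : ∀ (h : ↥H) (y : ↥K), (h : G) • (y : X) ∈ K := by
    rintro ⟨h, hh⟩ ⟨y, hy⟩
    have hhw : h • w = w := MulAction.mem_stabilizer_iff.mp hh
    show h • y ∈ closedBall w r
    rw [mem_closedBall]
    calc dist (h • y) w = dist (h • y) (h • w) := by rw [hhw]
      _ = dist y w := (hiso h).dist_eq y w
      _ ≤ r := mem_closedBall.mp hy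
  letI : SMul ↥H ↥K := ⟨fun h y => ⟨(h : G) • (y : X), hsmulmem h y⟩⟩
  have smul_def : ∀ (h : ↥H) (y : ↥K), ((h • y : ↥K) : X) = (h : G) • (y : X) := fun _ _ => rfl
  letI : MulAction ↥H ↥K :=
    { one_smul := by
        rintro ⟨y, hy⟩
        apply Subtype.ext
        show ((1 : ↥H) : G) • y = y
        simp
      mul_smul := by
        rintro ⟨a, ha⟩ ⟨b, hb⟩ ⟨y, hy⟩
        apply Subtype.ext
        show ((a * b : G)) • y = ((a : G)) • (((b : G)) • y)
        rw [mul_smul] }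
  have hisoK : ∀ h : ↥H, Isometry fun y : ↥K => h • y := by
    intro h
    apply Isometry.of_dist_eq
    intro y y'
    show dist (h • y) (h • y') = dist y y'
    rw [Subtype.dist_eq, Subtype.dist_eq, smul_def, smul_def]
    exact (hiso h).dist_eq _ _
  have hg1H : (g₁ : G) ∉ H := fun hmem => g₁.2 (MulAction.mem_stabilizer_iff.mp hmem)
  have hcardH : Nat.card ↥H < Nat.card G := by
    have h1 : Nat.card ↥H = (H : Set G).ncard := Nat.card_coe_set_eq _
    have h2 : Nat.card G = (univ : Set G).ncard := (Set.ncard_univ _).symm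
    rw [h1, h2]
    refine Set.ncard_lt_ncard ?_ Set.finite_univ
    exact (Set.ssubset_iff_of_subset (subset_univ _)).mpr ⟨g₁, mem_univ _, hg1H⟩
  have hQK := IH ↥K ↥H hisoK hcardH hKdim
  letI mK : MetricSpace (Quotient (MulAction.orbitRel ↥H ↥K)) := quotMS ↥K ↥H hisoK
  set N : Set (Quotient (MulAction.orbitRel G X)) := qmk G '' K with hN
  set O : Set (Quotient (MulAction.orbitRel G X)) := qmk G '' ball w r with hO
  refine ⟨O, N, qmk_isOpenMap hiso hm _ isOpen_ball, ⟨w, mem_ball_self hrpos, rfl⟩,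
    image_mono ball_subset_closedBall, ?_⟩
  -- the capture lemma
  have hcap : ∀ (g : G) (y y' : X), y ∈ K → y' ∈ K → dist y (g • y') ≤ 2 * r → g ∈ H := by
    intro g y y' hy hy' hd
    by_contra hgH
    have hgw : g • w ≠ w := fun h => hgH (MulAction.mem_stabilizer_iff.mpr h)
    have h1 := hsep g hgw
    have e1 : dist (g • w) (g • y') = dist w y' := (hiso g).dist_eq w y'
    have t4 : dist (g • w) w ≤ dist (g • w) (g • y') + dist (g • y') y + dist y w :=
      dist_triangle4 _ _ _ _
    have hyw : dist y w ≤ r := mem_closedBall.mp hy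
    have hy'w : dist w y' ≤ r := by rw [dist_comm]; exact mem_closedBall.mp hy'
    have hgy : dist (g • y') y ≤ 2 * r := by rw [dist_comm]; exact hd
    rw [e1] at t4
    have : s ≤ 4 * r := by
      calc s ≤ dist (g • w) w := h1
        _ ≤ dist w y' + (dist (g • y') y + dist y w) := by linarith
        _ ≤ 4 * r := by linarith
    rw [hr] at this
    linarith
  -- the chart map
  set f0 : ↥K → ↥N := fun y => ⟨qmk G y.1, ⟨y.1, y.2, rfl⟩⟩ with hf0
  have hwd : ∀ y y' : ↥K, (MulAction.orbitRel ↥H ↥K) y y' → f0 y = f0 y' := by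
    intro y y' hyy
    obtain ⟨h, hh⟩ := hyy
    apply Subtype.ext
    show qmk G y.1 = qmk G y'.1
    have : ((h • y' : ↥K) : X) = y.1 := congrArg Subtype.val hh
    rw [smul_def] at this
    rw [← this]
    exact qmk_eq_of_smul _ _
  set f : Quotient (MulAction.orbitRel ↥H ↥K) → ↥N := Quotient.lift f0 hwd with hf
  have hbij : Function.Bijective f := by
    constructor
    · intro a b
      induction a using Quotient.inductionOn with | _ y =>
      induction b using Quotient.inductionOn with | _ y' =>
      intro hab
      have heq : qmk G y.1 = qmk G y'.1 := congrArg Subtype.val hab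
      obtain ⟨g, (hg : g • (y'.1) = y.1)⟩ := Quotient.exact heq
      have hgH : g ∈ H := by
        refine hcap g y.1 y'.1 y.2 y'.2 ?_
        rw [hg, dist_self]
        positivity
      apply Quotient.sound
      exact ⟨⟨g, hgH⟩, Subtype.ext (by rw [smul_def]; exact hg)⟩
    · rintro ⟨q, x, hxK, rfl⟩
      exact ⟨Quotient.mk _ ⟨x, hxK⟩, rfl⟩
  have hisomf : Isometry f := by
    apply Isometry.of_dist_eq
    intro a b
    induction a using Quotient.inductionOn with | _ y =>
    induction b using Quotient.inductionOn with | _ y' =>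
    have hRHS : dist (Quotient.mk (MulAction.orbitRel ↥H ↥K) y)
        (Quotient.mk (MulAction.orbitRel ↥H ↥K) y') = odist ↥H y y' := rfl
    have hLHS : dist (f (Quotient.mk _ y)) (f (Quotient.mk _ y'))
        = dist (qmk G y.1) (qmk G y'.1) := by
      show dist (f0 y) (f0 y') = _
      rw [Subtype.dist_eq]
    rw [hLHS, hRHS, qdist_mk hiso hm]
    apply le_antisymm
    · obtain ⟨h, hh⟩ := odist_exists (G := ↥H) y y'
      have : dist y (h • y') = dist y.1 ((h : G) • y'.1) := by
        rw [Subtype.dist_eq, smul_def]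
      calc odist G y.1 y'.1 ≤ dist y.1 ((h : G) • y'.1) := odist_le _ _ _
        _ = odist ↥H y y' := by rw [← this, ← hh]
    · obtain ⟨g, hg⟩ := odist_exists (G := G) y.1 y'.1
      have h2r : dist y.1 (g • y'.1) ≤ 2 * r := by
        rw [← hg]
        calc odist G y.1 y'.1 ≤ dist y.1 y'.1 := odist_le_dist _ _
          _ ≤ dist y.1 w + dist w y'.1 := dist_triangle _ _ _
          _ ≤ 2 * r := by
              have a1 : dist y.1 w ≤ r := mem_closedBall.mp y.2
              have a2 : dist w y'.1 ≤ r := by rw [dist_comm]; exact mem_closedBall.mp y'.2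
              linarith
      have hgH : g ∈ H := hcap g y.1 y'.1 y.2 y'.2 h2r
      calc odist ↥H y y' ≤ dist y ((⟨g, hgH⟩ : ↥H) • y') := odist_le _ _ _
        _ = dist y.1 (g • y'.1) := by rw [Subtype.dist_eq, smul_def]
        _ = odist G y.1 y'.1 := hg.symm
  exact CoverDimLE.of_homeomorph
    (IsometryEquiv.mk (Equiv.ofBijective f hbij) hisomf).toHomeomorph hQK

end QuotAPI

theorem hardDir (k : ℕ) : ∀ (X : Type u) [MetricSpace X] (G : Type v) [Group G] [Finite G]
    [MulAction G X] (hiso : ∀ g : G, Isometry fun z : X => g • z), Nat.card G ≤ k →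
    ∀ n : ℕ, CoverDimLE X n →
    @CoverDimLE (Quotient (MulAction.orbitRel G X))
      (quotMS X G hiso).toUniformSpace.toTopologicalSpace n := by
  induction k with
  | zero =>
    intro X _ G _ _ _ hiso hcard n hX
    exfalso
    have : 0 < Nat.card G := Nat.card_pos
    omega
  | succ k IH =>
    intro X _ G _ _ _ hiso hcard n hX
    letI mQ : MetricSpace (Quotient (MulAction.orbitRel G X)) := quotMS X G hiso
    show CoverDimLE (Quotient (MulAction.orbitRel G X)) n
    have hIH' : ∀ (X' : Type u) [MetricSpace X'] (G' : Type v) [Group G'] [Finite G']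
        [MulAction G' X'] (hiso' : ∀ g : G', Isometry fun z : X' => g • z),
        Nat.card G' < Nat.card G → CoverDimLE X' n →
        @CoverDimLE (Quotient (MulAction.orbitRel G' X'))
          (quotMS X' G' hiso').toUniformSpace.toTopologicalSpace n := by
      intro X' _ G' _ _ _ hiso' hlt hX'
      exact IH X' G' hiso' (by omega) n hX'
    by_cases hCne : (fixSet G : Set X).Nonempty
    · set PC := qmk G '' (fixSet G : Set X) with hPC
      have hPCcl : IsClosed PC := isClosed_qmk_fixSet hiso rfl
      have hPCQne : PC.Nonempty := ⟨qmk G hCne.choose, hCne.choose, hCne.choose_spec, rfl⟩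
      set A : ℕ → Set (Quotient (MulAction.orbitRel G X)) := fun l =>
        Nat.casesOn l PC (fun l => {q | 1 / (l + 1 : ℝ) ≤ infDist q PC}) with hA
      have hAcl : ∀ l, IsClosed (A l) := by
        intro l
        cases l with
        | zero => exact hPCcl
        | succ l => exact isClosed_le continuous_const (continuous_infDist_pt PC)
      have hApg : ∀ l, PieceGood (A l) n := by
        intro l
        cases l with
        | zero => exact pieceGood_of_subtype (fixPart_dim hiso rfl hX)
        | succ l =>
          apply pieceGood_of_locally_good (hAcl (l+1))
          intro a ha
          obtain ⟨w, rfl⟩ := qmk_surjective a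
          have hmw : w ∉ fixSet G := by
            intro hwfix
            have h0 : infDist (qmk G w) PC = 0 := infDist_zero_of_mem ⟨w, hwfix, rfl⟩
            have hge : 1 / (l + 1 : ℝ) ≤ infDist (qmk G w) PC := ha
            rw [h0] at hge
            have : (0 : ℝ) < 1 / (l + 1 : ℝ) := by positivity
            linarith
          exact chart_dim hiso rfl hX hIH' hmw
      have hAuniv : (⋃ l, A l) = univ := by
        apply eq_univ_of_forall
        intro q
        by_cases hq : q ∈ PC
        · exact mem_iUnion.mpr ⟨0, hq⟩
        · have hne0 : infDist q PC ≠ 0 := fun h0 =>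
            hq ((hPCcl.mem_iff_infDist_zero hPCQne).mpr h0)
          have hpos : 0 < infDist q PC := lt_of_le_of_ne infDist_nonneg (Ne.symm hne0)
          obtain ⟨l, hl⟩ := exists_nat_one_div_lt hpos
          exact mem_iUnion.mpr ⟨l + 1, le_of_lt hl⟩
      apply coverDimLE_of_pieceGood_univ
      have hpg := pieceGood_iUnion_nat hAcl hApg (hAuniv ▸ isClosed_univ)
      exact pieceGood_mono hpg hAuniv.symm
    · have hFE : ∀ w : X, w ∉ fixSet G := fun w hwfix => hCne ⟨w, hwfix⟩
      apply coverDimLE_of_pieceGood_univ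
      apply pieceGood_of_locally_good isClosed_univ
      intro a _
      obtain ⟨w, rfl⟩ := qmk_surjective a
      exact chart_dim hiso rfl hX hIH' (hFE w)

/-- For a finite group acting by isometries on a metric space, the covering dimension of `Z`
equals the covering dimension of the quotient `F\Z` with the quotient metric. -/
theorem stmt_2 {Z : Type*} [MetricSpace Z] {F : Type*} [Group F] [Finite F]
    [MulAction F Z] (hiso : ∀ g : F, Isometry fun z : Z => g • z) :
    ∃ m : MetricSpace (Quotient (MulAction.orbitRel F Z)),
      (∀ z z' : Z,
        m.dist (Quotient.mk (MulAction.orbitRel F Z) z) (Quotient.mk (MulAction.orbitRel F Z) z')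
          = ⨅ p : F × F, dist (p.1 • z) (p.2 • z')) ∧
      ∀ n : ℕ, CoverDimLE Z n ↔
        @CoverDimLE (Quotient (MulAction.orbitRel F Z))
          m.toUniformSpace.toTopologicalSpace n := by
  refine ⟨quotMS Z F hiso, ?_, ?_⟩
  · intro z z'
    have h1 : (quotMS Z F hiso).dist (Quotient.mk (MulAction.orbitRel F Z) z)
        (Quotient.mk (MulAction.orbitRel F Z) z') = odist F z z' := rfl
    rw [h1]
    apply le_antisymm
    · apply le_ciInf
      intro p
      have hp : dist (p.1 • z) (p.2 • z') = dist z ((p.1⁻¹ * p.2) • z') := by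
        rw [← (hiso p.1⁻¹).dist_eq (p.1 • z) (p.2 • z'), inv_smul_smul, smul_smul]
      rw [hp]
      exact odist_le z z' _
    · obtain ⟨g, hg⟩ := odist_exists (G := F) z z'
      have h2 : dist z (g • z') = dist ((1 : F) • z) (g • z') := by rw [one_smul]
      rw [hg, h2]
      exact ciInf_le ⟨0, by rintro r ⟨p, rfl⟩; positivity⟩ ((1 : F), g)
  · intro n
    constructor
    · intro hZ
      exact hardDir (Nat.card F) Z F hiso le_rfl n hZ
    · intro hQ
      letI mQ : MetricSpace (Quotient (MulAction.orbitRel F Z)) := quotMS Z F hiso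
      exact easyDir hiso rfl hQ
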